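/- arXiv:math/9906070 — 3 statements merged into one kernel-verified Lean document; each statement's English description precedes it below -/
import Mathlib

section
/- Let a, b ∈ A and r, s ∈ G, and suppose that for every f ∈ C_c(G; A) and every t ∈ G one has a·f(r⁻¹t) = b·f(s⁻¹t). Then either r = s and a = b, or else a = 0 and b = 0. (This is Lemma 1.4, the faithfulness of the multiplier map m : B → M(C*(ℬ)), m_a(f)(t) = a·f(π(a)⁻¹t), in the case of the constant bundle with fibre A.) -/
/-- Auxiliary: a bump at a point avoiding a closed set. -/
lemma stmt_3_aux {G : Type*} [TopologicalSpace G] [RegularSpace G] [LocallyCompactSpace G]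
    {t : Set G} (ht : IsClosed t) {x : G} (hx : x ∉ t) :
    ∃ φ : G → ℝ, Continuous φ ∧ HasCompactSupport φ ∧ φ x = 1 ∧ ∀ y ∈ t, φ y = 0 := by
  obtain ⟨f, hf1, hf0, hfc, _⟩ :=
    exists_continuous_one_zero_of_isCompact (isCompact_singleton (x := x)) ht
      (Set.disjoint_singleton_left.mpr hx)
  exact ⟨f, f.continuous, hfc, hf1 rfl, fun y hy => hf0 hy⟩

/-- Lemma 1.4, faithfulness of the multiplier map
`m : B → M(C*(ℬ))`, `m_a(f)(t) = a · f(π(a)⁻¹ t)`, for the constant bundle with fibre `A`.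
If `a · f(r⁻¹t) = b · f(s⁻¹t)` for every `f ∈ C_c(G; A)` and every `t ∈ G`, then either
`r = s` and `a = b`, or `a = 0` and `b = 0`. -/
theorem stmt_3
    {G : Type*} [Group G] [TopologicalSpace G] [IsTopologicalGroup G]
    [LocallyCompactSpace G] [T2Space G]
    {A : Type*} [NonUnitalNormedRing A] [StarRing A] [CStarRing A]
    [NormedSpace ℂ A] [IsScalarTower ℂ A A] [SMulCommClass ℂ A A]
    [StarModule ℂ A] [CompleteSpace A]
    (a b : A) (r s : G)
    (h : ∀ f : G → A, Continuous f → HasCompactSupport f →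
      ∀ t : G, a * f (r⁻¹ * t) = b * f (s⁻¹ * t)) :
    (r = s ∧ a = b) ∨ (a = 0 ∧ b = 0) := by
  have key : ∀ (φ : G → ℝ) (c : A), Continuous φ → HasCompactSupport φ →
      ∀ t : G, φ (r⁻¹ * t) • (a * c) = φ (s⁻¹ * t) • (b * c) := by
    intro φ c hφ hφc t
    have := h (fun g => φ g • c) (hφ.smul continuous_const) (hφc.smul_right) t
    simpa [mul_smul_comm] using this
  by_cases hrs : r = s
  · left
    refine ⟨hrs, ?_⟩
    subst hrs
    have hc : ∀ c : A, a * c = b * c := by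
      intro c
      obtain ⟨φ, hφ, hφc, hφ1, _⟩ :=
        stmt_3_aux (t := (∅ : Set G)) isClosed_empty (Set.notMem_empty (1 : G))
      have := key φ c hφ hφc r
      rw [inv_mul_cancel, hφ1, one_smul, one_smul] at this
      exact this
    have hz : (a - b) * star (a - b) = 0 := by
      rw [sub_mul, hc (star (a - b)), sub_self]
    exact sub_eq_zero.mp ((CStarRing.mul_star_self_eq_zero_iff _).mp hz)
  · right
    constructor
    · have h1 : (1 : G) ∉ ({s⁻¹ * r} : Set G) := by
        simp only [Set.mem_singleton_iff]
        intro hh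
        exact hrs (inv_mul_eq_one.mp hh.symm).symm
      have hca : ∀ c : A, a * c = 0 := by
        intro c
        obtain ⟨φ, hφ, hφc, hφ1, hφ0⟩ := stmt_3_aux isClosed_singleton h1
        have := key φ c hφ hφc r
        rw [inv_mul_cancel, hφ1, hφ0 _ rfl, one_smul, zero_smul] at this
        exact this
      exact (CStarRing.mul_star_self_eq_zero_iff _).mp (hca (star a))
    · have h1 : (1 : G) ∉ ({r⁻¹ * s} : Set G) := by
        simp only [Set.mem_singleton_iff]
        intro hh
        exact hrs (inv_mul_eq_one.mp hh.symm)
      have hcb : ∀ c : A, b * c = 0 := by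
        intro c
        obtain ⟨φ, hφ, hφc, hφ1, hφ0⟩ := stmt_3_aux isClosed_singleton h1
        have := key φ c hφ hφc s
        rw [inv_mul_cancel, hφ1, hφ0 _ rfl, one_smul, zero_smul] at this
        exact this.symm
      exact (CStarRing.mul_star_self_eq_zero_iff _).mp (hcb (star b))
end

section
/- Let X be a complex Banach space, let f ∈ C_c(G; X) and k ∈ C_c(G; ℂ), and let ε > 0. Then there exist finitely many functions g_1, …, g_n ∈ C_c(G; ℂ) and points r_1, …, r_n ∈ G such that ∫_G ∫_G ‖ f(r)k(r⁻¹s) − Σ_{i=1}^n g_i(r) f(r) k(r_i⁻¹ s) ‖ dμ(s) dμ(r) ≤ ε. In particular, the function (r,s) ↦ f(r)k(r⁻¹s) lies in the closure, with respect to the L¹(μ×μ) norm, of the linear span of elementary tensors (r,s) ↦ h(r)l(s) with h ∈ C_c(G; X) and l ∈ C_c(G; ℂ). (This is the approximation established in the proof of Lemma 1.6, showing the set N = {Σ f_i • k_i} is dense.) -/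
open MeasureTheory

open Filter Set Topology Uniformity Pointwise

theorem stmt4_translation {G : Type*} [Group G] [TopologicalSpace G] [IsTopologicalGroup G]
    (k : G → ℂ) (hkc : Continuous k) (hks : HasCompactSupport k) {δ : ℝ} (hδ : 0 < δ) :
    ∃ V ∈ 𝓝 (1 : G), ∀ w ∈ V, ∀ x, ‖k (w * x) - k x‖ ≤ δ := by
  letI : UniformSpace G := IsTopologicalGroup.rightUniformSpace G
  have huc : UniformContinuous k := hks.uniformContinuous_of_continuous hkc
  have hmem : {p : G × G | dist (k p.1) (k p.2) < δ} ∈ 𝓤 G :=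
    huc (Metric.dist_mem_uniformity hδ)
  rw [uniformity_eq_comap_nhds_one'] at hmem
  obtain ⟨V, hV, hVsub⟩ := Filter.mem_comap.mp hmem
  refine ⟨V, hV, fun w hw x => ?_⟩
  have hx : ((x, w * x) : G × G) ∈ (fun p : G × G => p.2 * p.1⁻¹) ⁻¹' V := by
    simpa [div_eq_mul_inv, mul_assoc] using hw
  have := hVsub hx
  simp only [Set.mem_setOf_eq] at this
  rw [dist_comm, dist_eq_norm] at this
  exact this.le

set_option maxHeartbeats 1000000 in
/-- the approximation established in the proof of Lemma 1.6.
For `f ∈ C_c(G; X)`, `k ∈ C_c(G; ℂ)` and `ε > 0` there are `g₁, …, gₙ ∈ C_c(G; ℂ)` and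
points `r₁, …, rₙ ∈ G` with
`∫∫ ‖f(r)k(r⁻¹s) − Σᵢ gᵢ(r) f(r) k(rᵢ⁻¹s)‖ dμ(s) dμ(r) ≤ ε`. -/
theorem stmt_4
    {G : Type*} [Group G] [TopologicalSpace G] [IsTopologicalGroup G]
    [LocallyCompactSpace G] [T2Space G] [MeasurableSpace G] [BorelSpace G]
    (μ : Measure G) [μ.IsHaarMeasure]
    {X : Type*} [NormedAddCommGroup X] [NormedSpace ℂ X] [CompleteSpace X]
    (f : G → X) (hfc : Continuous f) (hfs : HasCompactSupport f)
    (k : G → ℂ) (hkc : Continuous k) (hks : HasCompactSupport k)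
    (ε : ℝ) (hε : 0 < ε) :
    ∃ (n : ℕ) (g : Fin n → G → ℂ) (p : Fin n → G),
      (∀ i, Continuous (g i) ∧ HasCompactSupport (g i)) ∧
      (∫ r, ∫ s, ‖k (r⁻¹ * s) • f r -
          ∑ i, (g i r * k ((p i)⁻¹ * s)) • f r‖ ∂μ ∂μ) ≤ ε := by
  classical
  set K := tsupport f with hK
  have hKc : IsCompact K := hfs
  set L := tsupport k with hL
  set S := K * L with hS
  have hSc : IsCompact S := hKc.mul hks
  have hSmeas : MeasurableSet S := hSc.isClosed.measurableSet
  have hSfin : μ S < ⊤ := hSc.measure_lt_top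
  set M : ℝ := (μ S).toReal with hM
  have hM0 : 0 ≤ M := ENNReal.toReal_nonneg
  have hfint : Integrable (fun r => ‖f r‖) μ :=
    hfc.norm.integrable_of_hasCompactSupport hfs.norm
  set C : ℝ := ∫ r, ‖f r‖ ∂μ with hC
  have hC0 : 0 ≤ C := integral_nonneg fun r => norm_nonneg _
  set D : ℝ := M * C + 1 with hD
  have hD0 : 0 < D := by positivity
  set δ : ℝ := ε / D with hδdef
  have hδ : 0 < δ := div_pos hε hD0
  obtain ⟨V, hV, hVk⟩ := stmt4_translation k hkc hks hδ
  set W : Set G := interior (V ∩ V⁻¹) with hW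
  have hWopen : IsOpen W := isOpen_interior
  have hWV : W ⊆ V⁻¹ := interior_subset.trans inter_subset_right
  have h1W : (1 : G) ∈ W :=
    mem_interior_iff_mem_nhds.2 (Filter.inter_mem hV (inv_mem_nhds_one G hV))
  have hcover : K ⊆ ⋃ r ∈ K, r • W := fun r hr =>
    Set.mem_biUnion hr (Set.mem_smul_set.2 ⟨1, h1W, by simp⟩)
  obtain ⟨b, hbK, hbfin, hbcov⟩ :=
    hKc.elim_finite_subcover_image (fun r _ => hWopen.smul r) hcover
  obtain ⟨n, pemb, hrange⟩ := hbfin.fin_embedding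
  set p : Fin n → G := fun i => pemb i with hp
  have hpK : ∀ i, p i ∈ K := fun i => hbK (hrange ▸ Set.mem_range_self i)
  have hcov' : K ⊆ ⋃ i, (p i) • W := by
    rw [← hrange] at hbcov
    simpa [Set.biUnion_range] using hbcov
  obtain ⟨g, hgsub, hgsum, hg01, hgcs⟩ := exists_continuous_sum_one_of_isOpen_isCompact
    (fun i => hWopen.smul (p i)) hKc hcov'
  set gC : Fin n → G → ℂ := fun i r => ((g i r : ℝ) : ℂ) with hgC
  have hker : ∀ r ∈ K, ∀ s, s ∉ S → k (r⁻¹ * s) = 0 := by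
    intro r hr s hs
    by_contra h
    have h2 : r * (r⁻¹ * s) ∈ K * L := Set.mul_mem_mul hr (subset_tsupport k h)
    simp only [mul_inv_cancel_left] at h2
    exact hs h2
  have key : ∀ r ∈ K, ∀ s, ‖k (r⁻¹ * s) - ∑ i, gC i r * k ((p i)⁻¹ * s)‖ ≤ δ := by
    intro r hr s
    have hsum : ∑ i, g i r = 1 := by
      have := hgsum hr
      simpa using this
    have hsumC : ∑ i, gC i r = 1 := by
      simp only [hgC, ← Complex.ofReal_sum, hsum, Complex.ofReal_one]
    have hrw : k (r⁻¹ * s) - ∑ i, gC i r * k ((p i)⁻¹ * s)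
        = ∑ i, gC i r * (k (r⁻¹ * s) - k ((p i)⁻¹ * s)) := by
      simp [mul_sub, Finset.sum_sub_distrib, ← Finset.sum_mul, hsumC]
    rw [hrw]
    calc ‖∑ i, gC i r * (k (r⁻¹ * s) - k ((p i)⁻¹ * s))‖
        ≤ ∑ i, ‖gC i r * (k (r⁻¹ * s) - k ((p i)⁻¹ * s))‖ := norm_sum_le _ _
      _ ≤ ∑ i, g i r * δ := by
          refine Finset.sum_le_sum fun i _ => ?_
          by_cases h0 : g i r = 0
          · simp [hgC, h0]
          · have hrmem : r ∈ (p i) • W := hgsub i (subset_tsupport _ h0)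
            obtain ⟨w, hwW, hrweq⟩ := Set.mem_smul_set.1 hrmem
            have hw' : w⁻¹ ∈ V := hWV hwW
            have hΔ : ‖k (r⁻¹ * s) - k ((p i)⁻¹ * s)‖ ≤ δ := by
              have h := hVk w⁻¹ hw' ((p i)⁻¹ * s)
              have hreq : r⁻¹ * s = w⁻¹ * ((p i)⁻¹ * s) := by
                rw [← hrweq, smul_eq_mul, mul_inv_rev, mul_assoc]
              rw [hreq]
              exact h
            have : ‖gC i r * (k (r⁻¹ * s) - k ((p i)⁻¹ * s))‖
                = g i r * ‖k (r⁻¹ * s) - k ((p i)⁻¹ * s)‖ := by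
              rw [norm_mul]
              simp [hgC, Complex.norm_real, Real.norm_eq_abs, abs_of_nonneg (hg01 i r).1]
            rw [this]
            exact mul_le_mul_of_nonneg_left hΔ (hg01 i r).1
      _ = δ := by rw [← Finset.sum_mul, hsum, one_mul]
  have hE0 : ∀ r ∈ K, ∀ s, s ∉ S →
      ‖k (r⁻¹ * s) • f r - ∑ i, (gC i r * k ((p i)⁻¹ * s)) • f r‖ = 0 := by
    intro r hr s hs
    have h1 := hker r hr s hs
    have h2 : ∀ i, k ((p i)⁻¹ * s) = 0 := fun i => hker (p i) (hpK i) s hs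
    simp [h1, h2]
  have hpt : ∀ r s, ‖k (r⁻¹ * s) • f r - ∑ i, (gC i r * k ((p i)⁻¹ * s)) • f r‖
      ≤ S.indicator (fun _ => δ * ‖f r‖) s := by
    intro r s
    by_cases hr : r ∈ K
    · by_cases hsS : s ∈ S
      · rw [Set.indicator_of_mem hsS]
        have heq : ‖k (r⁻¹ * s) • f r - ∑ i, (gC i r * k ((p i)⁻¹ * s)) • f r‖
            = ‖k (r⁻¹ * s) - ∑ i, gC i r * k ((p i)⁻¹ * s)‖ * ‖f r‖ := by
          rw [← Finset.sum_smul, ← sub_smul, norm_smul]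
        rw [heq]
        exact mul_le_mul_of_nonneg_right (key r hr s) (norm_nonneg _)
      · rw [Set.indicator_of_notMem hsS, hE0 r hr s hsS]
    · have hf0 : f r = 0 := image_eq_zero_of_notMem_tsupport hr
      have : (0:ℝ) ≤ S.indicator (fun _ => δ * ‖f r‖) s :=
        Set.indicator_nonneg (fun _ _ => by positivity) s
      simpa [hf0] using this
  have hBint : ∀ r : G, Integrable (S.indicator (fun _ => δ * ‖f r‖)) μ := fun r =>
    (integrableOn_const hSfin.ne).integrable_indicator hSmeas
  have hinner : ∀ r, (∫ s, ‖k (r⁻¹ * s) • f r -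
      ∑ i, (gC i r * k ((p i)⁻¹ * s)) • f r‖ ∂μ) ≤ (δ * M) * ‖f r‖ := by
    intro r
    calc (∫ s, ‖k (r⁻¹ * s) • f r - ∑ i, (gC i r * k ((p i)⁻¹ * s)) • f r‖ ∂μ)
        ≤ ∫ s, S.indicator (fun _ => δ * ‖f r‖) s ∂μ :=
          integral_mono_of_nonneg (Eventually.of_forall fun s => norm_nonneg _)
            (hBint r) (Eventually.of_forall (hpt r))
      _ = (μ S).toReal • (δ * ‖f r‖) := integral_indicator_const _ hSmeas
      _ = (δ * M) * ‖f r‖ := by rw [smul_eq_mul, ← hM]; ring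
  have houter : (∫ r, ∫ s, ‖k (r⁻¹ * s) • f r -
      ∑ i, (gC i r * k ((p i)⁻¹ * s)) • f r‖ ∂μ ∂μ) ≤ (δ * M) * C := by
    calc (∫ r, ∫ s, ‖k (r⁻¹ * s) • f r -
        ∑ i, (gC i r * k ((p i)⁻¹ * s)) • f r‖ ∂μ ∂μ)
        ≤ ∫ r, (δ * M) * ‖f r‖ ∂μ :=
          integral_mono_of_nonneg
            (Eventually.of_forall fun r => integral_nonneg fun s => norm_nonneg _)
            (hfint.const_mul (δ * M)) (Eventually.of_forall hinner)
      _ = (δ * M) * C := by rw [integral_const_mul, hC]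
  have hfinal : (δ * M) * C ≤ ε := by
    have hMCD : M * C ≤ D := by rw [hD]; linarith
    calc (δ * M) * C = ε * (M * C) / D := by rw [hδdef]; ring
      _ ≤ ε * D / D := by gcongr
      _ = ε := by field_simp
  exact ⟨n, gC, p,
    fun i => ⟨Complex.continuous_ofReal.comp (g i).continuous,
      (hgcs i).comp_left Complex.ofReal_zero⟩,
    houter.trans hfinal⟩
end

section
/- Let π : A → B(H) be a *-representation of A on a complex Hilbert space H. For all f, α, β ∈ C_c(G; A) and all ξ ∈ H one has ∫_G π(α(t))* ( ∫_G π(f(u)) π(β(u⁻¹t)) ξ dμ(u) ) dμ(t) = ∫_G π( (α·f·β)(s) ) ξ dμ(s), where (α·f·β)(s) = ∫_G α(t)* f(s) β(s⁻¹t) dμ(t). (This is the identity Ψ_{α,β}(μ_{λ,T}(f)) = μ_T(α·f·β) of Lemma 3.1, i.e. V_α* μ_{λ,T}(f) V_β equals the integrated representation of α·f·β, for the constant bundle with fibre A.) -/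
open MeasureTheory CStarAlgebra

/-- Lemma 3.1 for the constant bundle with fibre `A`:
`V_α* μ_{λ,T}(f) V_β = μ_T(α·f·β)`, i.e. for every `ξ ∈ H`,
`∫ t, π(α t)* (∫ u, π(f u) π(β(u⁻¹t)) ξ ∂μ) ∂μ = ∫ s, π((α·f·β)(s)) ξ ∂μ`,
where `(α·f·β)(s) = ∫ t, (α t)⋆ f(s) β(s⁻¹t) ∂μ`. -/
theorem stmt_7
    {G : Type*} [Group G] [TopologicalSpace G] [IsTopologicalGroup G]
    [LocallyCompactSpace G] [T2Space G] [MeasurableSpace G] [BorelSpace G]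
    (μ : Measure G) [μ.IsHaarMeasure]
    {A : Type*} [NonUnitalNormedRing A] [StarRing A] [CStarRing A]
    [NormedSpace ℂ A] [IsScalarTower ℂ A A] [SMulCommClass ℂ A A]
    [StarModule ℂ A] [CompleteSpace A]
    {H : Type*} [NormedAddCommGroup H] [InnerProductSpace ℂ H] [CompleteSpace H]
    (π : A →⋆ₙₐ[ℂ] (H →L[ℂ] H))
    (f α β : G → A)
    (hfc : Continuous f) (hfs : HasCompactSupport f)
    (hαc : Continuous α) (hαs : HasCompactSupport α)
    (hβc : Continuous β) (hβs : HasCompactSupport β)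
    (ξ : H) :
    ∫ t, (star (π (α t))) (∫ u, (π (f u)) ((π (β (u⁻¹ * t))) ξ) ∂μ) ∂μ
      = ∫ s, (π (∫ t, star (α t) * f s * β (s⁻¹ * t) ∂μ)) ξ ∂μ := by
  letI : NonUnitalCStarAlgebra A :=
    { ‹NonUnitalNormedRing A›, ‹StarRing A›, ‹CStarRing A›, ‹CompleteSpace A›,
      ‹NormedSpace ℂ A›, ‹IsScalarTower ℂ A A›, ‹SMulCommClass ℂ A A›, ‹StarModule ℂ A› with }
  letI : NonUnitalCStarAlgebra (H →L[ℂ] H) :=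
    { (inferInstance : NonUnitalNormedRing (H →L[ℂ] H)),
      (inferInstance : StarRing (H →L[ℂ] H)),
      (inferInstance : CStarRing (H →L[ℂ] H)),
      (inferInstance : CompleteSpace (H →L[ℂ] H)),
      (inferInstance : NormedSpace ℂ (H →L[ℂ] H)),
      (inferInstance : IsScalarTower ℂ (H →L[ℂ] H) (H →L[ℂ] H)),
      (inferInstance : SMulCommClass ℂ (H →L[ℂ] H) (H →L[ℂ] H)),
      (inferInstance : StarModule ℂ (H →L[ℂ] H)) with }
  have hπc : Continuous π := map_continuous π
  -- π as a continuous linear map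
  let πL : A →L[ℂ] (H →L[ℂ] H) :=
    { toFun := π
      map_add' := map_add π
      map_smul' := map_smul π
      cont := hπc }
  -- the common integrand
  set g : G → G → H := fun t u => (π (star (α t) * f u * β (u⁻¹ * t))) ξ with hg
  have hgc : Continuous (Function.uncurry g) := by
    apply Continuous.clm_apply _ continuous_const
    apply hπc.comp
    exact ((continuous_star.comp (hαc.comp continuous_fst)).mul
      (hfc.comp continuous_snd)).mul
      (hβc.comp ((continuous_snd.inv).mul continuous_fst))
  have hgs : HasCompactSupport (Function.uncurry g) := by
    apply HasCompactSupport.intro (hαs.prod hfs)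
    rintro ⟨t, u⟩ htu
    have : α t = 0 ∨ f u = 0 := by
      by_contra h
      push_neg at h
      exact htu ⟨subset_tsupport α h.1, subset_tsupport f h.2⟩
    rcases this with h | h <;> simp [Function.uncurry, g, h]
  -- LHS
  have hL : ∀ t, (star (π (α t))) (∫ u, (π (f u)) ((π (β (u⁻¹ * t))) ξ) ∂μ)
      = ∫ u, g t u ∂μ := by
    intro t
    have hint : Integrable (fun u => (π (f u)) ((π (β (u⁻¹ * t))) ξ)) μ := by
      apply Continuous.integrable_of_hasCompactSupport
      · exact ((hπc.comp hfc).clm_apply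
          ((hπc.comp (hβc.comp ((continuous_inv).mul continuous_const))).clm_apply
            continuous_const))
      · apply HasCompactSupport.intro hfs
        intro u hu
        have : f u = 0 := image_eq_zero_of_notMem_tsupport hu
        simp [this]
    rw [← ContinuousLinearMap.integral_comp_comm _ hint]
    congr 1 with u
    simp only [g, map_mul, map_star]
    rfl
  -- RHS
  have hR : ∀ s, (π (∫ t, star (α t) * f s * β (s⁻¹ * t) ∂μ)) ξ = ∫ t, g t s ∂μ := by
    intro s
    have hint : Integrable (fun t => star (α t) * f s * β (s⁻¹ * t)) μ := by
      apply Continuous.integrable_of_hasCompactSupport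
      · exact ((continuous_star.comp hαc).mul continuous_const).mul
          (hβc.comp ((continuous_const).mul continuous_id))
      · apply HasCompactSupport.intro hαs
        intro t ht
        have : α t = 0 := image_eq_zero_of_notMem_tsupport ht
        simp [this]
    have h1 : π (∫ t, star (α t) * f s * β (s⁻¹ * t) ∂μ)
        = ∫ t, πL (star (α t) * f s * β (s⁻¹ * t)) ∂μ :=
      (ContinuousLinearMap.integral_comp_comm πL hint).symm
    rw [h1, ContinuousLinearMap.integral_apply (πL.integrable_comp hint)]
    rfl
  simp only [hL, hR]
  exact integral_integral_swap_of_hasCompactSupport hgc hgs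
end
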